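/- Let Φ : ℤ³ → ℂ be Hermitian positive on Δ(N₁,N₂,N₃), and let A be the matrix indexed by S(N₁,N₂,N₃) with entries A(p,p') = Φ(p − p'). Suppose the kernel of A (as a linear map on functions S(N₁,N₂,N₃) → ℂ) is one-dimensional and is spanned by a nonzero vector d : S(N₁,N₂,N₃) → ℂ. Then the trigonometric polynomial f(α,β,γ) = |∑_{p ∈ S(N₁,N₂,N₃)} d(p)·exp(i(p₁α + p₂β + p₃γ))|² is extremal in Q(N₁,N₂,N₃): whenever f = g + h with g, h ∈ Q(N₁,N₂,N₃), there exists a real constant c ≥ 0 with g = c·f. -/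

import Mathlib

open Complex ComplexOrder

noncomputable section

/-- The lattice box `S(N₁,N₂,N₃)`. -/
def Sbox (N₁ N₂ N₃ : ℕ) : Finset (ℤ × ℤ × ℤ) :=
  Finset.Icc (0, 0, 0) ((N₁ : ℤ), (N₂ : ℤ), (N₃ : ℤ))

/-- The character `exp(i(kα + ℓβ + mγ))`. -/
def eChar (δ : ℤ × ℤ × ℤ) (v : ℝ × ℝ × ℝ) : ℂ :=
  Complex.exp (Complex.I *
    ((δ.1 : ℂ) * (v.1 : ℂ) + (δ.2.1 : ℂ) * (v.2.1 : ℂ) + (δ.2.2 : ℂ) * (v.2.2 : ℂ)))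

/-- `Φ` is Hermitian positive on `Δ(N₁,N₂,N₃)`. -/
def HermPos (N₁ N₂ N₃ : ℕ) (Φ : ℤ × ℤ × ℤ → ℂ) : Prop :=
  ∀ (n : ℕ) (x : Fin n → ℤ × ℤ × ℤ), (∀ i, x i ∈ Sbox N₁ N₂ N₃) →
    ∀ ξ : Fin n → ℂ, 0 ≤ ∑ i, ∑ j, ξ i * (starRingEnd ℂ) (ξ j) * Φ (x i - x j)

/-- `Q(N₁,N₂,N₃)`: finite sums of squared moduli of trig polynomials with frequencies in `S`. -/
def QSet (N₁ N₂ N₃ : ℕ) : Set ((ℝ × ℝ × ℝ) → ℂ) :=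
  { f | ∃ (r : ℕ) (q : Fin r → (ℤ × ℤ × ℤ) → ℂ),
      f = fun v => ∑ j, (‖∑ p ∈ Sbox N₁ N₂ N₃, q j p * eChar p v‖ : ℂ) ^ 2 }

namespace Cor2
open Matrix

/-! ### One-dimensional exponential integrals -/

def E (n : ℤ) (t : ℝ) : ℂ := Complex.exp (Complex.I * n * t)

lemma E_cont (n : ℤ) : Continuous (E n) := by unfold E; fun_prop

def I1 (n : ℤ) : ℂ := if n = 0 then ((2 * Real.pi : ℝ) : ℂ) else 0

lemma E_int (n : ℤ) : ∫ t in (0:ℝ)..(2 * Real.pi), E n t = I1 n := by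
  rcases eq_or_ne n 0 with h | h
  · simp [E, I1, h]
  · have hc : (Complex.I * (n:ℂ)) ≠ 0 :=
      mul_ne_zero Complex.I_ne_zero (by exact_mod_cast h)
    rw [I1, if_neg h]
    have h2 : ∀ t : ℝ, E n t = Complex.exp ((Complex.I * (n:ℂ)) * (t:ℂ)) := by
      intro t; rw [E]
    simp only [h2]
    rw [integral_exp_mul_complex hc]
    have : Complex.exp (Complex.I * (n:ℂ) * ((2 * Real.pi : ℝ) : ℂ)) = 1 := by
      rw [show Complex.I * (n:ℂ) * ((2 * Real.pi : ℝ) : ℂ)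
          = (n:ℂ) * (2 * (Real.pi:ℂ) * Complex.I) by push_cast; ring]
      exact Complex.exp_int_mul_two_pi_mul_I n
    rw [this]
    simp

lemma eChar_split (δ : ℤ × ℤ × ℤ) (v : ℝ × ℝ × ℝ) :
    eChar δ v = E δ.1 v.1 * E δ.2.1 v.2.1 * E δ.2.2 v.2.2 := by
  rw [eChar, E, E, E, ← Complex.exp_add, ← Complex.exp_add]
  ring_nf

lemma eChar_conj (p : ℤ × ℤ × ℤ) (v : ℝ × ℝ × ℝ) :
    (starRingEnd ℂ) (eChar p v) = eChar (-p) v := by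
  rw [eChar, eChar, ← Complex.exp_conj]
  congr 1
  simp only [_root_.map_mul, map_add, Complex.conj_I, Complex.conj_ofReal, map_intCast,
    Prod.fst_neg, Prod.snd_neg]
  push_cast
  ring

lemma eChar_mul (p q : ℤ × ℤ × ℤ) (v : ℝ × ℝ × ℝ) :
    eChar p v * eChar q v = eChar (p + q) v := by
  rw [eChar, eChar, eChar, ← Complex.exp_add]
  congr 1
  simp only [Prod.fst_add, Prod.snd_add]
  push_cast
  ring

/-! ### The triple integral functional -/

def J (u : (ℝ × ℝ × ℝ) → ℂ) : ℂ :=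
  ∫ a in (0:ℝ)..(2 * Real.pi), ∫ b in (0:ℝ)..(2 * Real.pi),
    ∫ c in (0:ℝ)..(2 * Real.pi), u (a, b, c)

def Ktp : ℂ := ((2 * Real.pi : ℝ) : ℂ) ^ 3

lemma Ktp_ne_zero : Ktp ≠ 0 := by
  rw [Ktp]
  refine pow_ne_zero _ ?_
  simp only [ne_eq, Complex.ofReal_eq_zero]
  positivity

lemma int_sum_mul {ι : Type*} (s : Finset ι) (r : ι → ℂ) (n : ι → ℤ) :
    (∫ t in (0:ℝ)..(2 * Real.pi), ∑ x ∈ s, r x * E (n x) t) = ∑ x ∈ s, r x * I1 (n x) := by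
  rw [intervalIntegral.integral_finset_sum]
  · exact Finset.sum_congr rfl fun x _ => by
      rw [intervalIntegral.integral_const_mul, E_int]
  · intro x _
    exact (continuous_const.mul (E_cont (n x))).intervalIntegrable _ _

lemma prod_I1 (μ : ℤ × ℤ × ℤ) :
    I1 μ.1 * I1 μ.2.1 * I1 μ.2.2 = if μ = 0 then Ktp else 0 := by
  obtain ⟨k, l, m⟩ := μ
  simp only [I1, Ktp, Prod.mk_eq_zero]
  by_cases hk : k = 0 <;> by_cases hl : l = 0 <;> by_cases hm : m = 0 <;>
    simp [hk, hl, hm] <;> ring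

lemma J_trig {ι : Type*} (s : Finset ι) (c : ι → ℂ) (ψ : ι → ℤ × ℤ × ℤ) :
    J (fun v => ∑ x ∈ s, c x * eChar (ψ x) v)
      = ∑ x ∈ s, c x * (if ψ x = 0 then Ktp else 0) := by
  rw [J]
  have h1 : ∀ a b : ℝ,
      (∫ t in (0:ℝ)..(2 * Real.pi), ∑ x ∈ s, c x * eChar (ψ x) (a, b, t))
        = ∑ x ∈ s, (c x * E (ψ x).1 a * E (ψ x).2.1 b) * I1 (ψ x).2.2 := by
    intro a b
    rw [show (fun t : ℝ => ∑ x ∈ s, c x * eChar (ψ x) (a, b, t))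
        = fun t => ∑ x ∈ s, (c x * E (ψ x).1 a * E (ψ x).2.1 b) * E (ψ x).2.2 t from
      funext fun t => Finset.sum_congr rfl fun x _ => by rw [eChar_split]; ring]
    exact int_sum_mul s _ _
  simp only [h1]
  have h2 : ∀ a : ℝ,
      (∫ t in (0:ℝ)..(2 * Real.pi),
          ∑ x ∈ s, (c x * E (ψ x).1 a * E (ψ x).2.1 t) * I1 (ψ x).2.2)
        = ∑ x ∈ s, (c x * E (ψ x).1 a * I1 (ψ x).2.2) * I1 (ψ x).2.1 := by
    intro a
    rw [show (fun t : ℝ => ∑ x ∈ s, (c x * E (ψ x).1 a * E (ψ x).2.1 t) * I1 (ψ x).2.2)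
        = fun t => ∑ x ∈ s, (c x * E (ψ x).1 a * I1 (ψ x).2.2) * E (ψ x).2.1 t from
      funext fun t => Finset.sum_congr rfl fun x _ => by ring]
    exact int_sum_mul s _ _
  simp only [h2]
  rw [show (fun t : ℝ => ∑ x ∈ s, (c x * E (ψ x).1 t * I1 (ψ x).2.2) * I1 (ψ x).2.1)
      = fun t => ∑ x ∈ s, (c x * I1 (ψ x).2.2 * I1 (ψ x).2.1) * E (ψ x).1 t from
    funext fun t => Finset.sum_congr rfl fun x _ => by ring]
  rw [int_sum_mul s _ _]
  exact Finset.sum_congr rfl fun x _ => by rw [← prod_I1 (ψ x)]; ring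

/-! ### Expansion of squared moduli -/

lemma sq_norm_cast (z : ℂ) : ((‖z‖ : ℂ)) ^ 2 = z * (starRingEnd ℂ) z := by
  rw [Complex.mul_conj]
  norm_cast
  rw [Complex.normSq_eq_norm_sq]

lemma sq_norm_expand (q : (ℤ × ℤ × ℤ) → ℂ) (S : Finset (ℤ × ℤ × ℤ)) (v : ℝ × ℝ × ℝ) :
    ((‖∑ p ∈ S, q p * eChar p v‖ : ℂ)) ^ 2
      = ∑ p ∈ S, ∑ p' ∈ S, (q p * (starRingEnd ℂ) (q p')) * eChar (p - p') v := by
  rw [sq_norm_cast, map_sum, Finset.sum_mul_sum]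
  refine Finset.sum_congr rfl fun p _ => Finset.sum_congr rfl fun p' _ => ?_
  rw [_root_.map_mul, eChar_conj, show q p * eChar p v * ((starRingEnd ℂ) (q p') * eChar (-p') v)
      = (q p * (starRingEnd ℂ) (q p')) * (eChar p v * eChar (-p') v) from by ring,
    eChar_mul, sub_eq_add_neg]

lemma rep (S : Finset (ℤ × ℤ × ℤ)) {r : ℕ} (q : Fin r → (ℤ × ℤ × ℤ) → ℂ)
    (δ : ℤ × ℤ × ℤ) (v : ℝ × ℝ × ℝ) :
    (∑ j, ((‖∑ p ∈ S, q j p * eChar p v‖ : ℂ)) ^ 2) * eChar (-δ) v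
      = ∑ x ∈ (Finset.univ : Finset (Fin r)) ×ˢ S ×ˢ S,
          (q x.1 x.2.1 * (starRingEnd ℂ) (q x.1 x.2.2)) * eChar (x.2.1 - x.2.2 - δ) v := by
  rw [Finset.sum_product, Finset.sum_mul]
  refine Finset.sum_congr rfl fun j _ => ?_
  rw [Finset.sum_product, sq_norm_expand, Finset.sum_mul]
  refine Finset.sum_congr rfl fun p _ => ?_
  rw [Finset.sum_mul]
  refine Finset.sum_congr rfl fun p' _ => ?_
  rw [mul_assoc, eChar_mul, sub_eq_add_neg (p - p') δ]

lemma J_mul_eChar (S : Finset (ℤ × ℤ × ℤ)) {r : ℕ} (q : Fin r → (ℤ × ℤ × ℤ) → ℂ)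
    (δ : ℤ × ℤ × ℤ) (u : (ℝ × ℝ × ℝ) → ℂ)
    (hu : ∀ v, u v = ∑ j, ((‖∑ p ∈ S, q j p * eChar p v‖ : ℂ)) ^ 2) :
    J (fun v => u v * eChar (-δ) v)
      = ∑ x ∈ (Finset.univ : Finset (Fin r)) ×ˢ S ×ˢ S,
          (q x.1 x.2.1 * (starRingEnd ℂ) (q x.1 x.2.2))
            * (if x.2.1 - x.2.2 - δ = 0 then Ktp else 0) := by
  have hfun : (fun v => u v * eChar (-δ) v)
      = fun v => ∑ x ∈ (Finset.univ : Finset (Fin r)) ×ˢ S ×ˢ S,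
          (q x.1 x.2.1 * (starRingEnd ℂ) (q x.1 x.2.2)) * eChar (x.2.1 - x.2.2 - δ) v := by
    funext v
    rw [hu v, rep]
  rw [hfun, J_trig]

/-! ### The box of differences -/

def Dbox (N₁ N₂ N₃ : ℕ) : Finset (ℤ × ℤ × ℤ) :=
  Finset.Icc (-(N₁ : ℤ), -(N₂ : ℤ), -(N₃ : ℤ)) ((N₁ : ℤ), (N₂ : ℤ), (N₃ : ℤ))

lemma sub_mem_Dbox {N₁ N₂ N₃ : ℕ} {p p' : ℤ × ℤ × ℤ}
    (hp : p ∈ Sbox N₁ N₂ N₃) (hp' : p' ∈ Sbox N₁ N₂ N₃) : p - p' ∈ Dbox N₁ N₂ N₃ := by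
  simp only [Sbox, Dbox, Finset.mem_Icc, Prod.le_def, Prod.fst_sub, Prod.snd_sub] at *
  omega

lemma memT {r : ℕ} {N₁ N₂ N₃ : ℕ} :
    ∀ x ∈ (Finset.univ : Finset (Fin r)) ×ˢ Sbox N₁ N₂ N₃ ×ˢ Sbox N₁ N₂ N₃,
      x.2.1 - x.2.2 ∈ Dbox N₁ N₂ N₃ := by
  intro x hx
  simp only [Finset.mem_product] at hx
  exact sub_mem_Dbox hx.2.1 hx.2.2

lemma sum_delta {ι : Type*} (N₁ N₂ N₃ : ℕ) (Φ : ℤ × ℤ × ℤ → ℂ) (T : Finset ι) (c : ι → ℂ)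
    (a b : ι → ℤ × ℤ × ℤ) (hmem : ∀ x ∈ T, a x - b x ∈ Dbox N₁ N₂ N₃) :
    ∑ δ ∈ Dbox N₁ N₂ N₃, Φ (-δ) * ∑ x ∈ T, c x * (if a x - b x - δ = 0 then Ktp else 0)
      = Ktp * ∑ x ∈ T, c x * Φ (b x - a x) := by
  simp only [Finset.mul_sum]
  rw [Finset.sum_comm]
  refine Finset.sum_congr rfl fun x hx => ?_
  have h1 : ∀ δ : ℤ × ℤ × ℤ, Φ (-δ) * (c x * (if a x - b x - δ = 0 then Ktp else 0))
      = if a x - b x = δ then Φ (-δ) * (c x * Ktp) else 0 := by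
    intro δ
    by_cases hδ : a x - b x - δ = 0
    · rw [if_pos hδ, if_pos (sub_eq_zero.mp hδ)]
    · rw [if_neg hδ, if_neg (fun hc => hδ (by rw [hc]; ring)), mul_zero, mul_zero]
  simp only [h1]
  rw [Finset.sum_ite_eq (Dbox N₁ N₂ N₃) (a x - b x) (fun δ => Φ (-δ) * (c x * Ktp)),
    if_pos (hmem x hx), neg_sub]
  ring

/-! ### Positivity and Hermitian-ness of the matrix -/

lemma isHermitian_of_nonneg {n : Type*} [Fintype n] [DecidableEq n] (A : Matrix n n ℂ)
    (h : ∀ x : n → ℂ, 0 ≤ star x ⬝ᵥ A.mulVec x) : A.IsHermitian := by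
  have hconj : ∀ x : n → ℂ, (starRingEnd ℂ) (star x ⬝ᵥ A.mulVec x) = star x ⬝ᵥ A.mulVec x := by
    intro x
    rw [Complex.conj_eq_iff_im]
    exact ((Complex.le_def.1 (h x)).2).symm
  have quad : ∀ (i j : n) (a b : ℂ),
      star ((Pi.single i a : n → ℂ) + Pi.single j b) ⬝ᵥ
          A.mulVec ((Pi.single i a : n → ℂ) + Pi.single j b)
        = (starRingEnd ℂ) a * (A i i * a) + (starRingEnd ℂ) a * (A i j * b)
          + (starRingEnd ℂ) b * (A j i * a) + (starRingEnd ℂ) b * (A j j * b) := by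
    intro i j a b
    have hst : star ((Pi.single i a : n → ℂ) + Pi.single j b)
        = (Pi.single i ((starRingEnd ℂ) a) : n → ℂ) + Pi.single j ((starRingEnd ℂ) b) := by
      ext k
      simp [Pi.single_apply, apply_ite (star : ℂ → ℂ)]
    rw [hst, Matrix.mulVec_add, Matrix.mulVec_single, Matrix.mulVec_single]
    simp only [add_dotProduct, single_dotProduct, Pi.add_apply, Pi.smul_apply, Matrix.col_apply,
      MulOpposite.smul_eq_mul_unop, MulOpposite.unop_op]
    ring
  have hd : ∀ i : n, (starRingEnd ℂ) (A i i) = A i i := by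
    intro i
    have h0 := hconj (Pi.single i 1)
    have heq : star (Pi.single i (1:ℂ) : n → ℂ) ⬝ᵥ A.mulVec (Pi.single i 1) = A i i := by
      have hst : star (Pi.single i (1:ℂ) : n → ℂ) = Pi.single i 1 := by
        ext k; simp [Pi.single_apply, apply_ite (star : ℂ → ℂ)]
      rw [hst, Matrix.mulVec_single, single_dotProduct, Pi.smul_apply, Matrix.col_apply,
        MulOpposite.smul_eq_mul_unop, MulOpposite.unop_op]
      ring
    rwa [heq] at h0
  rw [Matrix.IsHermitian.ext_iff]
  intro i j
  have e1 := hconj ((Pi.single i 1 : n → ℂ) + Pi.single j 1)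
  rw [quad i j 1 1] at e1
  simp only [map_add, _root_.map_mul, _root_.map_one, one_mul, mul_one, Complex.conj_conj] at e1
  have e2 := hconj ((Pi.single i 1 : n → ℂ) + Pi.single j Complex.I)
  rw [quad i j 1 Complex.I] at e2
  simp only [map_add, _root_.map_mul, _root_.map_one, Complex.conj_I, one_mul, mul_one,
    map_neg, Complex.conj_conj] at e2
  have hdi := hd i
  have hdj := hd j
  have e1' : (starRingEnd ℂ) (A i j) + (starRingEnd ℂ) (A j i) = A i j + A j i := by
    linear_combination e1 - hdi - hdj
  have e2' : -Complex.I * (starRingEnd ℂ) (A i j) + Complex.I * (starRingEnd ℂ) (A j i)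
      = Complex.I * A i j - Complex.I * A j i := by
    linear_combination e2 - hdi + Complex.I * Complex.I * hdj
  have hI := Complex.I_mul_I
  rw [Complex.star_def]
  linear_combination e1' / 2 - Complex.I / 2 * e2'
    - (((starRingEnd ℂ) (A i j) - (starRingEnd ℂ) (A j i) + A i j - A j i) / 2) * hI

lemma psd_of_hermpos (N₁ N₂ N₃ : ℕ) (Φ : ℤ × ℤ × ℤ → ℂ) (hΦ : HermPos N₁ N₂ N₃ Φ)
    (A : Matrix ↥(Sbox N₁ N₂ N₃) ↥(Sbox N₁ N₂ N₃) ℂ)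
    (hA : A = Matrix.of fun (p p' : ↥(Sbox N₁ N₂ N₃)) => Φ ((p : ℤ × ℤ × ℤ) - (p' : ℤ × ℤ × ℤ)))
    (w : ↥(Sbox N₁ N₂ N₃) → ℂ) : 0 ≤ star w ⬝ᵥ A.mulVec w := by
  classical
  have e : Fin (Fintype.card ↥(Sbox N₁ N₂ N₃)) ≃ ↥(Sbox N₁ N₂ N₃) :=
    (Fintype.equivFin ↥(Sbox N₁ N₂ N₃)).symm
  have h := hΦ (Fintype.card ↥(Sbox N₁ N₂ N₃)) (fun i => ↑(e i)) (fun i => (e i).2)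
    (fun i => star (w (e i)))
  have h2 : (∑ i, ∑ j, (fun i => star (w (e i))) i * (starRingEnd ℂ) ((fun i => star (w (e i))) j)
        * Φ ((fun i => ((e i : ↥(Sbox N₁ N₂ N₃)) : ℤ × ℤ × ℤ)) i
            - (fun i => ((e i : ↥(Sbox N₁ N₂ N₃)) : ℤ × ℤ × ℤ)) j))
      = ∑ p : ↥(Sbox N₁ N₂ N₃), ∑ p' : ↥(Sbox N₁ N₂ N₃),
          star (w p) * (starRingEnd ℂ) (star (w p'))
            * Φ ((p : ℤ × ℤ × ℤ) - (p' : ℤ × ℤ × ℤ)) := by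
    refine Fintype.sum_equiv e _ _ fun i => ?_
    refine Fintype.sum_equiv e _ _ fun j => ?_
    rfl
  have h3 : (∑ p : ↥(Sbox N₁ N₂ N₃), ∑ p' : ↥(Sbox N₁ N₂ N₃),
        star (w p) * (starRingEnd ℂ) (star (w p'))
          * Φ ((p : ℤ × ℤ × ℤ) - (p' : ℤ × ℤ × ℤ)))
      = star w ⬝ᵥ A.mulVec w := by
    rw [dotProduct]
    refine Finset.sum_congr rfl fun p _ => ?_
    rw [Matrix.mulVec, dotProduct, Finset.mul_sum]
    refine Finset.sum_congr rfl fun p' _ => ?_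
    rw [hA]
    simp only [Matrix.of_apply, Pi.star_apply, Complex.star_def, Complex.conj_conj]
    ring
  exact le_of_le_of_eq h (h2.trans h3)

lemma W_eq_quad (N₁ N₂ N₃ : ℕ) (Φ : ℤ × ℤ × ℤ → ℂ)
    (A : Matrix ↥(Sbox N₁ N₂ N₃) ↥(Sbox N₁ N₂ N₃) ℂ)
    (hA : A = Matrix.of fun (p p' : ↥(Sbox N₁ N₂ N₃)) => Φ ((p : ℤ × ℤ × ℤ) - (p' : ℤ × ℤ × ℤ)))
    (q : (ℤ × ℤ × ℤ) → ℂ) :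
    ∑ p ∈ Sbox N₁ N₂ N₃, ∑ p' ∈ Sbox N₁ N₂ N₃, q p * (starRingEnd ℂ) (q p') * Φ (p' - p)
      = star (fun p : ↥(Sbox N₁ N₂ N₃) => q ↑p) ⬝ᵥ
          A.mulVec (fun p : ↥(Sbox N₁ N₂ N₃) => q ↑p) := by
  rw [Finset.sum_comm, dotProduct]
  rw [← Finset.sum_coe_sort (Sbox N₁ N₂ N₃)
    (fun p' => ∑ p ∈ Sbox N₁ N₂ N₃, q p * (starRingEnd ℂ) (q p') * Φ (p' - p))]
  refine Finset.sum_congr rfl fun i _ => ?_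
  rw [Matrix.mulVec, dotProduct, ← Finset.sum_coe_sort (Sbox N₁ N₂ N₃)
    (fun p => q p * (starRingEnd ℂ) (q ↑i) * Φ (↑i - p)), Finset.mul_sum]
  refine Finset.sum_congr rfl fun j _ => ?_
  rw [hA]
  simp only [Matrix.of_apply, Pi.star_apply, Complex.star_def]
  ring

lemma T_to_quad (N₁ N₂ N₃ : ℕ) (Φ : ℤ × ℤ × ℤ → ℂ)
    (A : Matrix ↥(Sbox N₁ N₂ N₃) ↥(Sbox N₁ N₂ N₃) ℂ)
    (hA : A = Matrix.of fun (p p' : ↥(Sbox N₁ N₂ N₃)) => Φ ((p : ℤ × ℤ × ℤ) - (p' : ℤ × ℤ × ℤ)))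
    {r : ℕ} (q : Fin r → (ℤ × ℤ × ℤ) → ℂ) :
    ∑ x ∈ (Finset.univ : Finset (Fin r)) ×ˢ Sbox N₁ N₂ N₃ ×ˢ Sbox N₁ N₂ N₃,
        (q x.1 x.2.1 * (starRingEnd ℂ) (q x.1 x.2.2)) * Φ (x.2.2 - x.2.1)
      = ∑ j : Fin r, star (fun p : ↥(Sbox N₁ N₂ N₃) => q j ↑p) ⬝ᵥ
          A.mulVec (fun p : ↥(Sbox N₁ N₂ N₃) => q j ↑p) := by
  rw [Finset.sum_product]
  refine Finset.sum_congr rfl fun j _ => ?_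
  rw [Finset.sum_product]
  exact W_eq_quad N₁ N₂ N₃ Φ A hA (q j)

end Cor2

open Cor2 Matrix

/-- Corollary 2: if the matrix `A(p,p') = Φ(p-p')` built from a Hermitian positive `Φ` has a
one-dimensional kernel spanned by `d ≠ 0`, then `f = |∑_{p ∈ S} d(p) e^{i(p·v)}|²` is extremal
in `Q(N₁,N₂,N₃)`. -/
theorem extremal_of_kernel_dim_one (N₁ N₂ N₃ : ℕ) (Φ : ℤ × ℤ × ℤ → ℂ)
    (hΦ : HermPos N₁ N₂ N₃ Φ)
    (A : Matrix ↥(Sbox N₁ N₂ N₃) ↥(Sbox N₁ N₂ N₃) ℂ)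
    (hA : A = Matrix.of fun (p p' : ↥(Sbox N₁ N₂ N₃)) => Φ ((p : ℤ × ℤ × ℤ) - (p' : ℤ × ℤ × ℤ)))
    (d : ↥(Sbox N₁ N₂ N₃) → ℂ)
    (hd0 : d ≠ 0) (hdker : A.mulVec d = 0)
    (hker1 : ∀ v : ↥(Sbox N₁ N₂ N₃) → ℂ,
      A.mulVec v = 0 → ∃ c : ℂ, v = c • d)
    (f : ℝ × ℝ × ℝ → ℂ)
    (hf : f = fun v => (‖∑ p : ↥(Sbox N₁ N₂ N₃),
      d p * eChar (p : ℤ × ℤ × ℤ) v‖ : ℂ) ^ 2) :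
    ∀ g h : (ℝ × ℝ × ℝ) → ℂ, g ∈ QSet N₁ N₂ N₃ → h ∈ QSet N₁ N₂ N₃ → f = g + h →
      ∃ c : ℝ, 0 ≤ c ∧ g = fun v => (c : ℂ) * f v := by
  intro g h hgQ hhQ hfgh
  classical
  obtain ⟨rg, qg, hge⟩ := hgQ
  obtain ⟨rh, qh, hhe⟩ := hhQ
  -- write `f` in `QSet` style
  set q0 : (ℤ × ℤ × ℤ) → ℂ := fun p => if hp : p ∈ Sbox N₁ N₂ N₃ then d ⟨p, hp⟩ else 0 with hq0def
  have hq0 : ∀ p : ↥(Sbox N₁ N₂ N₃), q0 ↑p = d p := by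
    intro p
    rw [hq0def]
    simp only [p.2, dif_pos]
  have hw0 : (fun p : ↥(Sbox N₁ N₂ N₃) => q0 ↑p) = d := funext hq0
  set q0f : Fin 1 → (ℤ × ℤ × ℤ) → ℂ := fun _ => q0 with hq0f
  have hfq : ∀ v, f v = ∑ j : Fin 1,
      ((‖∑ p ∈ Sbox N₁ N₂ N₃, q0f j p * eChar p v‖ : ℂ)) ^ 2 := by
    intro v
    rw [hf]
    have hsum : (∑ p : ↥(Sbox N₁ N₂ N₃), d p * eChar (↑p) v)
        = ∑ p ∈ Sbox N₁ N₂ N₃, q0 p * eChar p v := by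
      rw [← Finset.sum_coe_sort (Sbox N₁ N₂ N₃) (fun p => q0 p * eChar p v)]
      exact Finset.sum_congr rfl fun p _ => by rw [hq0]
    simp only [hsum, hq0f, Fin.sum_univ_one]
  -- the key coefficient identity for every δ
  have key : ∀ δ : ℤ × ℤ × ℤ,
      (∑ x ∈ (Finset.univ : Finset (Fin 1)) ×ˢ Sbox N₁ N₂ N₃ ×ˢ Sbox N₁ N₂ N₃,
          (q0f x.1 x.2.1 * (starRingEnd ℂ) (q0f x.1 x.2.2))
            * (if x.2.1 - x.2.2 - δ = 0 then Ktp else 0))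
      = (∑ x ∈ (Finset.univ : Finset (Fin rg)) ×ˢ Sbox N₁ N₂ N₃ ×ˢ Sbox N₁ N₂ N₃,
          (qg x.1 x.2.1 * (starRingEnd ℂ) (qg x.1 x.2.2))
            * (if x.2.1 - x.2.2 - δ = 0 then Ktp else 0))
        + (∑ x ∈ (Finset.univ : Finset (Fin rh)) ×ˢ Sbox N₁ N₂ N₃ ×ˢ Sbox N₁ N₂ N₃,
          (qh x.1 x.2.1 * (starRingEnd ℂ) (qh x.1 x.2.2))
            * (if x.2.1 - x.2.2 - δ = 0 then Ktp else 0)) := by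
    intro δ
    have h1 := J_mul_eChar (Sbox N₁ N₂ N₃) q0f δ f hfq
    have hgh : (fun v => f v * eChar (-δ) v)
        = fun v => ∑ x ∈ (((Finset.univ : Finset (Fin rg)) ×ˢ Sbox N₁ N₂ N₃ ×ˢ
              Sbox N₁ N₂ N₃).disjSum
            ((Finset.univ : Finset (Fin rh)) ×ˢ Sbox N₁ N₂ N₃ ×ˢ Sbox N₁ N₂ N₃)),
            (Sum.elim (fun x : Fin rg × (ℤ × ℤ × ℤ) × (ℤ × ℤ × ℤ) =>
                qg x.1 x.2.1 * (starRingEnd ℂ) (qg x.1 x.2.2))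
              (fun x : Fin rh × (ℤ × ℤ × ℤ) × (ℤ × ℤ × ℤ) =>
                qh x.1 x.2.1 * (starRingEnd ℂ) (qh x.1 x.2.2)) x)
              * eChar (Sum.elim
                  (fun x : Fin rg × (ℤ × ℤ × ℤ) × (ℤ × ℤ × ℤ) => x.2.1 - x.2.2 - δ)
                  (fun x : Fin rh × (ℤ × ℤ × ℤ) × (ℤ × ℤ × ℤ) => x.2.1 - x.2.2 - δ) x) v := by
      funext v
      rw [Finset.sum_disjSum]
      simp only [Sum.elim_inl, Sum.elim_inr]
      rw [hfgh]
      simp only [Pi.add_apply, hge, hhe]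
      rw [add_mul]
      exact congrArg₂ (· + ·) (rep _ qg δ v) (rep _ qh δ v)
    have h2 := congrArg J hgh
    rw [h1, J_trig] at h2
    rw [Finset.sum_disjSum] at h2
    simp only [Sum.elim_inl, Sum.elim_inr] at h2
    exact h2
  -- sum the key identity against Φ(-δ) over the difference box
  have total :
      Ktp * (∑ x ∈ (Finset.univ : Finset (Fin 1)) ×ˢ Sbox N₁ N₂ N₃ ×ˢ Sbox N₁ N₂ N₃,
          (q0f x.1 x.2.1 * (starRingEnd ℂ) (q0f x.1 x.2.2)) * Φ (x.2.2 - x.2.1))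
      = Ktp * (∑ x ∈ (Finset.univ : Finset (Fin rg)) ×ˢ Sbox N₁ N₂ N₃ ×ˢ Sbox N₁ N₂ N₃,
          (qg x.1 x.2.1 * (starRingEnd ℂ) (qg x.1 x.2.2)) * Φ (x.2.2 - x.2.1))
        + Ktp * (∑ x ∈ (Finset.univ : Finset (Fin rh)) ×ˢ Sbox N₁ N₂ N₃ ×ˢ Sbox N₁ N₂ N₃,
          (qh x.1 x.2.1 * (starRingEnd ℂ) (qh x.1 x.2.2)) * Φ (x.2.2 - x.2.1)) := by
    calc Ktp * _ = ∑ δ ∈ Dbox N₁ N₂ N₃, Φ (-δ) *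
          ∑ x ∈ (Finset.univ : Finset (Fin 1)) ×ˢ Sbox N₁ N₂ N₃ ×ˢ Sbox N₁ N₂ N₃,
            (q0f x.1 x.2.1 * (starRingEnd ℂ) (q0f x.1 x.2.2))
              * (if x.2.1 - x.2.2 - δ = 0 then Ktp else 0) :=
        (sum_delta N₁ N₂ N₃ Φ _ _ _ _ memT).symm
      _ = ∑ δ ∈ Dbox N₁ N₂ N₃,
            (Φ (-δ) * ∑ x ∈ (Finset.univ : Finset (Fin rg)) ×ˢ Sbox N₁ N₂ N₃ ×ˢ Sbox N₁ N₂ N₃,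
              (qg x.1 x.2.1 * (starRingEnd ℂ) (qg x.1 x.2.2))
                * (if x.2.1 - x.2.2 - δ = 0 then Ktp else 0)
            + Φ (-δ) * ∑ x ∈ (Finset.univ : Finset (Fin rh)) ×ˢ Sbox N₁ N₂ N₃ ×ˢ Sbox N₁ N₂ N₃,
              (qh x.1 x.2.1 * (starRingEnd ℂ) (qh x.1 x.2.2))
                * (if x.2.1 - x.2.2 - δ = 0 then Ktp else 0)) :=
        Finset.sum_congr rfl fun δ _ => by rw [key δ, mul_add]
      _ = _ := by
        rw [Finset.sum_add_distrib, sum_delta N₁ N₂ N₃ Φ _ _ _ _ memT,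
          sum_delta N₁ N₂ N₃ Φ _ _ _ _ memT]
  rw [T_to_quad N₁ N₂ N₃ Φ A hA q0f, T_to_quad N₁ N₂ N₃ Φ A hA qg,
    T_to_quad N₁ N₂ N₃ Φ A hA qh] at total
  have hfzero : (∑ j : Fin 1, star (fun p : ↥(Sbox N₁ N₂ N₃) => q0f j ↑p) ⬝ᵥ
      A.mulVec (fun p : ↥(Sbox N₁ N₂ N₃) => q0f j ↑p)) = 0 := by
    simp only [hq0f, Fin.sum_univ_one]
    rw [hw0, hdker, dotProduct_zero]
  rw [hfzero, mul_zero] at total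
  -- extract that each quadratic form vanishes
  have hQgpos : ∀ j : Fin rg, 0 ≤ star (fun p : ↥(Sbox N₁ N₂ N₃) => qg j ↑p) ⬝ᵥ
      A.mulVec (fun p : ↥(Sbox N₁ N₂ N₃) => qg j ↑p) :=
    fun j => psd_of_hermpos N₁ N₂ N₃ Φ hΦ A hA _
  have hQhpos : ∀ k : Fin rh, 0 ≤ star (fun p : ↥(Sbox N₁ N₂ N₃) => qh k ↑p) ⬝ᵥ
      A.mulVec (fun p : ↥(Sbox N₁ N₂ N₃) => qh k ↑p) :=
    fun k => psd_of_hermpos N₁ N₂ N₃ Φ hΦ A hA _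
  have hsum0 : (∑ j : Fin rg, star (fun p : ↥(Sbox N₁ N₂ N₃) => qg j ↑p) ⬝ᵥ
        A.mulVec (fun p : ↥(Sbox N₁ N₂ N₃) => qg j ↑p))
      + (∑ k : Fin rh, star (fun p : ↥(Sbox N₁ N₂ N₃) => qh k ↑p) ⬝ᵥ
        A.mulVec (fun p : ↥(Sbox N₁ N₂ N₃) => qh k ↑p)) = 0 := by
    have := total.symm
    rw [← mul_add] at this
    rcases mul_eq_zero.mp this with hK | hok
    · exact absurd hK Ktp_ne_zero
    · exact hok
  have hs1 : 0 ≤ ∑ j : Fin rg, star (fun p : ↥(Sbox N₁ N₂ N₃) => qg j ↑p) ⬝ᵥ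
      A.mulVec (fun p : ↥(Sbox N₁ N₂ N₃) => qg j ↑p) :=
    Finset.sum_nonneg fun j _ => hQgpos j
  have hs2 : 0 ≤ ∑ k : Fin rh, star (fun p : ↥(Sbox N₁ N₂ N₃) => qh k ↑p) ⬝ᵥ
      A.mulVec (fun p : ↥(Sbox N₁ N₂ N₃) => qh k ↑p) :=
    Finset.sum_nonneg fun k _ => hQhpos k
  have hgsum0 : (∑ j : Fin rg, star (fun p : ↥(Sbox N₁ N₂ N₃) => qg j ↑p) ⬝ᵥ
      A.mulVec (fun p : ↥(Sbox N₁ N₂ N₃) => qg j ↑p)) = 0 := by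
    refine le_antisymm ?_ hs1
    calc (∑ j : Fin rg, star (fun p : ↥(Sbox N₁ N₂ N₃) => qg j ↑p) ⬝ᵥ
          A.mulVec (fun p : ↥(Sbox N₁ N₂ N₃) => qg j ↑p))
        ≤ _ + _ := le_add_of_nonneg_right hs2
      _ = 0 := hsum0
  have hQg0 : ∀ j : Fin rg, star (fun p : ↥(Sbox N₁ N₂ N₃) => qg j ↑p) ⬝ᵥ
      A.mulVec (fun p : ↥(Sbox N₁ N₂ N₃) => qg j ↑p) = 0 := by
    intro j
    exact (Finset.sum_eq_zero_iff_of_nonneg (fun j _ => hQgpos j)).mp hgsum0 j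
      (Finset.mem_univ j)
  -- hence each coefficient vector is in the kernel, so proportional to d
  have hpsd : A.PosSemidef :=
    .of_dotProduct_mulVec_nonneg (isHermitian_of_nonneg A (psd_of_hermpos N₁ N₂ N₃ Φ hΦ A hA))
      (psd_of_hermpos N₁ N₂ N₃ Φ hΦ A hA)
  have hkerg : ∀ j : Fin rg, ∃ c : ℂ, (fun p : ↥(Sbox N₁ N₂ N₃) => qg j ↑p) = c • d := by
    intro j
    exact hker1 _ ((hpsd.dotProduct_mulVec_zero_iff _).mp (hQg0 j))
  choose cc hcc using hkerg
  refine ⟨∑ j : Fin rg, ‖cc j‖ ^ 2, Finset.sum_nonneg fun j _ => by positivity, ?_⟩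
  rw [hge]
  funext v
  have hGj : ∀ j : Fin rg, (∑ p ∈ Sbox N₁ N₂ N₃, qg j p * eChar p v)
      = cc j * ∑ p : ↥(Sbox N₁ N₂ N₃), d p * eChar (↑p) v := by
    intro j
    rw [← Finset.sum_coe_sort (Sbox N₁ N₂ N₃) (fun p => qg j p * eChar p v), Finset.mul_sum]
    refine Finset.sum_congr rfl fun p _ => ?_
    have hqp := congrFun (hcc j) p
    simp only [Pi.smul_apply, smul_eq_mul] at hqp
    rw [hqp]
    ring
  rw [hf]
  push_cast
  rw [Finset.sum_mul]
  refine Finset.sum_congr rfl fun j _ => ?_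
  rw [hGj j, norm_mul]
  push_cast
  ring
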